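/- Work in the ring R[[Z]] of formal power series over R = ℚ[a,b,c,d] (polynomials in four commuting indeterminates). Define the 6×6 matrix F over R[[Z]] with rows F₁ = (0,0,0,0,1,0), F₂ = (0,0,0,dZ,0,cZ), F₃ = (0,0,0,cZ,0,dZ), F₄ = (0,1,0,0,0,0), F₅ = (bZ,0,aZ,0,0,0), F₆ = (aZ,0,bZ,0,0,0); the column vector t = (cdZ², 0, 0, abZ², 0, 0)ᵀ; and the row vector g = (0, abZ², 0, 0, cdZ², 0). Then the matrix I − F is invertible over R[[Z]], and the scalar transfer function T = g·(I−F)^{−1}·t satisfies: the coefficient of Z⁵ in T equals a²b²d + bc²d², and the coefficient of Z⁶ in T equals 2a²bc²d + a²b²d² + b²c²d². -/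

import Mathlib

set_option maxRecDepth 8000
set_option maxHeartbeats 2000000
set_option synthInstance.maxHeartbeats 400000

noncomputable section

open MvPolynomial Matrix

/-- Coefficient ring: polynomials in the four stream indeterminates `a, b, c, d`. -/
abbrev TransferRing : Type := MvPolynomial (Fin 4) ℚ

/-- The four stream indeterminates, viewed as constant power series. -/
def aS : PowerSeries TransferRing := PowerSeries.C (R := TransferRing) (X 0)
def bS : PowerSeries TransferRing := PowerSeries.C (R := TransferRing) (X 1)
def cS : PowerSeries TransferRing := PowerSeries.C (R := TransferRing) (X 2)
def dS : PowerSeries TransferRing := PowerSeries.C (R := TransferRing) (X 3)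

/-- The Hamming-weight indeterminate `Z`. -/
def ZS : PowerSeries TransferRing := PowerSeries.X

/-- State-transition matrix `F` of the 4-state rate-1/2 convolutional code with the
4-stream spatial de-multiplexer. -/
def Fmat : Matrix (Fin 6) (Fin 6) (PowerSeries TransferRing) :=
  !![0, 0, 0, 0, 1, 0;
     0, 0, 0, dS * ZS, 0, cS * ZS;
     0, 0, 0, cS * ZS, 0, dS * ZS;
     0, 1, 0, 0, 0, 0;
     bS * ZS, 0, aS * ZS, 0, 0, 0;
     aS * ZS, 0, bS * ZS, 0, 0, 0]

/-- Input (splitting) vector `t`. -/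
def tvec : Fin 6 → PowerSeries TransferRing :=
  ![cS * dS * ZS ^ 2, 0, 0, aS * bS * ZS ^ 2, 0, 0]

/-- Output (merging) vector `g`. -/
def gvec : Fin 6 → PowerSeries TransferRing :=
  ![0, aS * bS * ZS ^ 2, 0, 0, cS * dS * ZS ^ 2, 0]

@[simp] lemma cons_val_five {α : Type*} {m : ℕ} (x : α) (u : Fin (m + 5) → α) :
    Matrix.vecCons x u 5 =
      Matrix.vecHead (Matrix.vecTail (Matrix.vecTail (Matrix.vecTail (Matrix.vecTail u)))) :=
  rfl

def u1 : Fin 6 → PowerSeries TransferRing :=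
  ![0,
    aS * bS * dS * ZS ^ 3,
    aS * bS * cS * ZS ^ 3,
    0,
    bS * cS * dS * ZS ^ 3,
    aS * cS * dS * ZS ^ 3]

def u2 : Fin 6 → PowerSeries TransferRing :=
  ![bS * cS * dS * ZS ^ 3,
    aS * cS ^ 2 * dS * ZS ^ 4,
    aS * cS * dS ^ 2 * ZS ^ 4,
    aS * bS * dS * ZS ^ 3,
    aS ^ 2 * bS * cS * ZS ^ 4,
    aS * bS ^ 2 * cS * ZS ^ 4]

def u3 : Fin 6 → PowerSeries TransferRing :=
  ![aS ^ 2 * bS * cS * ZS ^ 4,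
    aS * bS * dS ^ 2 * ZS ^ 4 + aS * bS ^ 2 * cS ^ 2 * ZS ^ 5,
    aS * bS * cS * dS * ZS ^ 4 + aS * bS ^ 2 * cS * dS * ZS ^ 5,
    aS * cS ^ 2 * dS * ZS ^ 4,
    bS ^ 2 * cS * dS * ZS ^ 4 + aS ^ 2 * cS * dS ^ 2 * ZS ^ 5,
    aS * bS * cS * dS * ZS ^ 4 + aS * bS * cS * dS ^ 2 * ZS ^ 5]

def u4 : Fin 6 → PowerSeries TransferRing :=
  ![bS ^ 2 * cS * dS * ZS ^ 4 + aS ^ 2 * cS * dS ^ 2 * ZS ^ 5,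
    aS * cS ^ 2 * dS ^ 2 * ZS ^ 5 + aS * bS * cS ^ 2 * dS * ZS ^ 5 + aS * bS * cS ^ 2 * dS ^ 2 * ZS ^ 6,
    aS * cS ^ 3 * dS * ZS ^ 5 + aS * bS * cS * dS ^ 2 * ZS ^ 5 + aS * bS * cS * dS ^ 3 * ZS ^ 6,
    aS * bS * dS ^ 2 * ZS ^ 4 + aS * bS ^ 2 * cS ^ 2 * ZS ^ 5,
    aS ^ 2 * bS * cS * dS * ZS ^ 5 + aS ^ 2 * bS ^ 2 * cS * ZS ^ 5 + aS ^ 2 * bS ^ 2 * cS * dS * ZS ^ 6,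
    aS * bS ^ 2 * cS * dS * ZS ^ 5 + aS * bS ^ 3 * cS * dS * ZS ^ 6 + aS ^ 3 * bS * cS * ZS ^ 5]

def u5 : Fin 6 → PowerSeries TransferRing :=
  ![aS ^ 2 * bS * cS * dS * ZS ^ 5 + aS ^ 2 * bS ^ 2 * cS * ZS ^ 5 + aS ^ 2 * bS ^ 2 * cS * dS * ZS ^ 6,
    aS * bS * dS ^ 3 * ZS ^ 5 + 2 * aS * bS ^ 2 * cS ^ 2 * dS * ZS ^ 6 + aS * bS ^ 3 * cS ^ 2 * dS * ZS ^ 7 + aS ^ 3 * bS * cS ^ 2 * ZS ^ 6,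
    aS * bS * cS * dS ^ 2 * ZS ^ 5 + aS * bS ^ 2 * cS * dS ^ 2 * ZS ^ 6 + aS * bS ^ 2 * cS ^ 3 * ZS ^ 6 + aS * bS ^ 3 * cS * dS ^ 2 * ZS ^ 7 + aS ^ 3 * bS * cS * dS * ZS ^ 6,
    aS * cS ^ 2 * dS ^ 2 * ZS ^ 5 + aS * bS * cS ^ 2 * dS * ZS ^ 5 + aS * bS * cS ^ 2 * dS ^ 2 * ZS ^ 6,
    bS ^ 3 * cS * dS * ZS ^ 5 + aS ^ 2 * cS ^ 3 * dS * ZS ^ 6 + 2 * aS ^ 2 * bS * cS * dS ^ 2 * ZS ^ 6 + aS ^ 2 * bS * cS * dS ^ 3 * ZS ^ 7,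
    aS * bS * cS ^ 3 * dS * ZS ^ 6 + aS * bS ^ 2 * cS * dS * ZS ^ 5 + aS * bS ^ 2 * cS * dS ^ 2 * ZS ^ 6 + aS * bS ^ 2 * cS * dS ^ 3 * ZS ^ 7 + aS ^ 3 * cS * dS ^ 2 * ZS ^ 6]

def Gmat : Matrix (Fin 6) (Fin 6) (PowerSeries TransferRing) :=
  !![bS, 0, aS, 0, 0, 0;
     aS * cS * ZS, dS, bS * cS * ZS, 0, 0, 0;
     aS * dS * ZS, cS, bS * dS * ZS, 0, 0, 0;
     0, 0, 0, dS, 0, cS;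
     0, 0, 0, aS * cS * ZS, bS, aS * dS * ZS;
     0, 0, 0, bS * cS * ZS, aS, bS * dS * ZS]

def Emain : PowerSeries TransferRing :=
  PowerSeries.C (R := TransferRing) (X 1 * X 2 ^ 2 * X 3 ^ 2) * PowerSeries.X ^ 5 +
  PowerSeries.C (R := TransferRing) (X 0 ^ 2 * X 1 ^ 2 * X 3) * PowerSeries.X ^ 5 +
  PowerSeries.C (R := TransferRing) (X 1 ^ 2 * X 2 ^ 2 * X 3 ^ 2) * PowerSeries.X ^ 6 +
  PowerSeries.C (R := TransferRing) (2 * (X 0 ^ 2 * X 1 * X 2 ^ 2 * X 3)) * PowerSeries.X ^ 6 +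
  PowerSeries.C (R := TransferRing) (X 0 ^ 2 * X 1 ^ 2 * X 3 ^ 2) * PowerSeries.X ^ 6 +
  PowerSeries.C (R := TransferRing) (X 1 ^ 3 * X 2 ^ 2 * X 3 ^ 2) * PowerSeries.X ^ 7 +
  PowerSeries.C (R := TransferRing) (X 0 ^ 2 * X 2 ^ 2 * X 3 ^ 3) * PowerSeries.X ^ 7 +
  PowerSeries.C (R := TransferRing) (2 * (X 0 ^ 2 * X 1 * X 2 ^ 2 * X 3 ^ 2)) * PowerSeries.X ^ 7 +
  PowerSeries.C (R := TransferRing) (X 0 ^ 2 * X 1 ^ 2 * X 3 ^ 3) * PowerSeries.X ^ 7 +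
  PowerSeries.C (R := TransferRing) (2 * (X 0 ^ 2 * X 1 ^ 2 * X 2 ^ 2 * X 3)) * PowerSeries.X ^ 7 +
  PowerSeries.C (R := TransferRing) (X 0 ^ 2 * X 1 ^ 3 * X 2 ^ 2) * PowerSeries.X ^ 7 +
  PowerSeries.C (R := TransferRing) (X 0 ^ 2 * X 2 ^ 4 * X 3 ^ 2) * PowerSeries.X ^ 8 +
  PowerSeries.C (R := TransferRing) (2 * (X 0 ^ 2 * X 1 * X 2 ^ 2 * X 3 ^ 3)) * PowerSeries.X ^ 8 +
  PowerSeries.C (R := TransferRing) (2 * (X 0 ^ 2 * X 1 ^ 2 * X 2 ^ 2 * X 3 ^ 2)) * PowerSeries.X ^ 8 +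
  PowerSeries.C (R := TransferRing) (2 * (X 0 ^ 2 * X 1 ^ 3 * X 2 ^ 2 * X 3)) * PowerSeries.X ^ 8 +
  PowerSeries.C (R := TransferRing) (X 0 ^ 4 * X 1 ^ 2 * X 2 ^ 2) * PowerSeries.X ^ 8 +
  PowerSeries.C (R := TransferRing) (X 0 ^ 2 * X 1 * X 2 ^ 2 * X 3 ^ 4) * PowerSeries.X ^ 9 +
  PowerSeries.C (R := TransferRing) (X 0 ^ 2 * X 1 ^ 4 * X 2 ^ 2 * X 3) * PowerSeries.X ^ 9


/-- constant-coefficient matrix of `Fmat` -/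
def F0 : Matrix (Fin 6) (Fin 6) TransferRing :=
  !![0, 0, 0, 0, 1, 0;
     0, 0, 0, 0, 0, 0;
     0, 0, 0, 0, 0, 0;
     0, 1, 0, 0, 0, 0;
     0, 0, 0, 0, 0, 0;
     0, 0, 0, 0, 0, 0]

lemma F0_map : Fmat.map (PowerSeries.constantCoeff (R := TransferRing)) = F0 := by
  ext i j
  fin_cases i <;> fin_cases j <;>
    simp [Fmat, F0, aS, bS, cS, dS, ZS, _root_.map_mul, Matrix.vecHead, Matrix.vecTail]

lemma F0_sq : F0 * F0 = 0 := by
  ext i j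
  fin_cases i <;> fin_cases j <;>
    simp [F0, Matrix.mul_apply, Fin.sum_univ_six, Matrix.vecHead, Matrix.vecTail]

lemma isUnit_one_sub_Fmat : IsUnit (1 - Fmat) := by
  rw [Matrix.isUnit_iff_isUnit_det]
  rw [PowerSeries.isUnit_iff_constantCoeff]
  have h : (PowerSeries.constantCoeff (R := TransferRing)) (1 - Fmat).det
      = ((PowerSeries.constantCoeff (R := TransferRing)).mapMatrix (1 - Fmat)).det :=
    by rw [RingHom.map_det]
  have hm : (PowerSeries.constantCoeff (R := TransferRing)).mapMatrix (1 - Fmat) = 1 - F0 := by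
    rw [_root_.map_sub, _root_.map_one, RingHom.mapMatrix_apply, F0_map]
  rw [h, hm]
  rw [← Matrix.isUnit_iff_isUnit_det]
  refine ⟨⟨1 - F0, 1 + F0, ?_, ?_⟩, rfl⟩
  · show (1 - F0) * (1 + F0) = 1
    have : (1 - F0) * (1 + F0) = 1 - F0 * F0 := by noncomm_ring
    rw [this, F0_sq, sub_zero]
  · show (1 + F0) * (1 - F0) = 1
    have : (1 + F0) * (1 - F0) = 1 - F0 * F0 := by noncomm_ring
    rw [this, F0_sq, sub_zero]

lemma Fmat_sq : Fmat * Fmat = ZS • Gmat := by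
  ext i j
  fin_cases i <;> fin_cases j <;>
    (simp [Fmat, Gmat, Matrix.mul_apply, Fin.sum_univ_six, Matrix.vecHead, Matrix.vecTail]; try ring)

lemma F6_dvd : ∀ i j, (ZS ^ 3) ∣ (Fmat ^ 6) i j := by
  have h6 : Fmat ^ 6 = (Fmat * Fmat) ^ 3 := by
    rw [← pow_two, ← pow_mul]
  intro i j
  rw [h6, Fmat_sq, smul_pow, Matrix.smul_apply, smul_eq_mul]
  exact ⟨(Gmat ^ 3) i j, rfl⟩

lemma tvec_dvd : ∀ j, (ZS ^ 2) ∣ tvec j := by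
  intro j
  fin_cases j
  · exact Dvd.intro_left _ rfl
  · exact dvd_zero _
  · exact dvd_zero _
  · exact Dvd.intro_left _ rfl
  · exact dvd_zero _
  · exact dvd_zero _

lemma gvec_dvd : ∀ j, (ZS ^ 2) ∣ gvec j := by
  intro j
  fin_cases j
  · exact dvd_zero _
  · exact Dvd.intro_left _ rfl
  · exact dvd_zero _
  · exact dvd_zero _
  · exact Dvd.intro_left _ rfl
  · exact dvd_zero _

lemma remainder_dvd :
    (ZS ^ 7) ∣ gvec ⬝ᵥ ((1 - Fmat)⁻¹ *ᵥ (Fmat ^ 6 *ᵥ tvec)) := by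
  have hw : ∀ i, (ZS ^ 5) ∣ (Fmat ^ 6 *ᵥ tvec) i := by
    intro i
    simp only [Matrix.mulVec, dotProduct]
    apply Finset.dvd_sum
    intro j _
    have : (ZS ^ 5 : PowerSeries TransferRing) = ZS ^ 3 * ZS ^ 2 := by ring
    rw [this]
    exact mul_dvd_mul (F6_dvd i j) (tvec_dvd j)
  have hv : ∀ i, (ZS ^ 5) ∣ ((1 - Fmat)⁻¹ *ᵥ (Fmat ^ 6 *ᵥ tvec)) i := by
    intro i
    simp only [Matrix.mulVec, dotProduct]
    apply Finset.dvd_sum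
    intro j _
    exact ((hw j).mul_left _)
  simp only [dotProduct]
  apply Finset.dvd_sum
  intro j _
  have : (ZS ^ 7 : PowerSeries TransferRing) = ZS ^ 2 * ZS ^ 5 := by ring
  rw [this]
  exact mul_dvd_mul (gvec_dvd j) (hv j)

lemma hu1 : Fmat *ᵥ tvec = u1 := by
  funext i
  fin_cases i <;>
    (simp [Fmat, tvec, u1, Matrix.mulVec, dotProduct, Fin.sum_univ_six, Matrix.vecHead, Matrix.vecTail]; try ring)

lemma hu2 : Fmat *ᵥ u1 = u2 := by
  funext i
  fin_cases i <;>
    (simp [Fmat, u1, u2, Matrix.mulVec, dotProduct, Fin.sum_univ_six, Matrix.vecHead, Matrix.vecTail]; try ring)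

lemma hu3 : Fmat *ᵥ u2 = u3 := by
  funext i
  fin_cases i <;>
    (simp [Fmat, u2, u3, Matrix.mulVec, dotProduct, Fin.sum_univ_six, Matrix.vecHead, Matrix.vecTail]; try ring)

lemma hu4 : Fmat *ᵥ u3 = u4 := by
  funext i
  fin_cases i <;>
    (simp [Fmat, u3, u4, Matrix.mulVec, dotProduct, Fin.sum_univ_six, Matrix.vecHead, Matrix.vecTail]; try ring)

lemma hu5 : Fmat *ᵥ u4 = u5 := by
  funext i
  fin_cases i <;>
    (simp [Fmat, u4, u5, Matrix.mulVec, dotProduct, Fin.sum_univ_six, Matrix.vecHead, Matrix.vecTail]; try ring)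

lemma main_eq :
    gvec ⬝ᵥ ((1 + Fmat + Fmat ^ 2 + Fmat ^ 3 + Fmat ^ 4 + Fmat ^ 5) *ᵥ tvec) = Emain := by
  have e2 : Fmat ^ 2 *ᵥ tvec = u2 := by
    rw [pow_two, ← Matrix.mulVec_mulVec, hu1, hu2]
  have e3 : Fmat ^ 3 *ᵥ tvec = u3 := by
    rw [pow_succ', ← Matrix.mulVec_mulVec, e2, hu3]
  have e4 : Fmat ^ 4 *ᵥ tvec = u4 := by
    rw [pow_succ', ← Matrix.mulVec_mulVec, e3, hu4]
  have e5 : Fmat ^ 5 *ᵥ tvec = u5 := by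
    rw [pow_succ', ← Matrix.mulVec_mulVec, e4, hu5]
  rw [Matrix.add_mulVec, Matrix.add_mulVec, Matrix.add_mulVec, Matrix.add_mulVec,
    Matrix.add_mulVec, Matrix.one_mulVec, hu1, e2, e3, e4, e5]
  simp [gvec, tvec, u1, u2, u3, u4, u5, Emain, aS, bS, cS, dS, ZS,
    dotProduct, Fin.sum_univ_six, Pi.add_apply,
    Matrix.cons_val_zero, Matrix.cons_val_one, Matrix.head_cons,
    Matrix.cons_val_two, Matrix.cons_val_three, Matrix.cons_val_four, cons_val_five,
    Matrix.vecTail, Matrix.vecHead, Function.comp, _root_.map_mul, _root_.map_pow,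
    _root_.map_ofNat]
  ring

lemma coeff_Emain_five :
    PowerSeries.coeff (R := TransferRing) 5 Emain =
      (X 0) ^ 2 * (X 1) ^ 2 * (X 3) + (X 1) * (X 2) ^ 2 * (X 3) ^ 2 := by
  simp only [Emain, map_add, PowerSeries.coeff_C_mul, PowerSeries.coeff_X_pow]
  norm_num
  ring

lemma coeff_Emain_six :
    PowerSeries.coeff (R := TransferRing) 6 Emain =
      2 * (X 0) ^ 2 * (X 1) * (X 2) ^ 2 * (X 3) +
        (X 0) ^ 2 * (X 1) ^ 2 * (X 3) ^ 2 + (X 1) ^ 2 * (X 2) ^ 2 * (X 3) ^ 2 := by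
  simp only [Emain, map_add, PowerSeries.coeff_C_mul, PowerSeries.coeff_X_pow]
  norm_num
  ring

lemma transfer_split :
    gvec ⬝ᵥ ((1 - Fmat)⁻¹ *ᵥ tvec) =
      Emain + gvec ⬝ᵥ ((1 - Fmat)⁻¹ *ᵥ (Fmat ^ 6 *ᵥ tvec)) := by
  have hdet : IsUnit (1 - Fmat).det :=
    (Matrix.isUnit_iff_isUnit_det _).mp isUnit_one_sub_Fmat
  have hgeom : (1 - Fmat) * (1 + Fmat + Fmat ^ 2 + Fmat ^ 3 + Fmat ^ 4 + Fmat ^ 5)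
      = 1 - Fmat ^ 6 := by noncomm_ring
  have hS : (1 + Fmat + Fmat ^ 2 + Fmat ^ 3 + Fmat ^ 4 + Fmat ^ 5)
      = (1 - Fmat)⁻¹ * (1 - Fmat ^ 6) := by
    rw [← hgeom, Matrix.nonsing_inv_mul_cancel_left _ _ hdet]
  have hsplit : (1 - Fmat)⁻¹ =
      (1 + Fmat + Fmat ^ 2 + Fmat ^ 3 + Fmat ^ 4 + Fmat ^ 5) + (1 - Fmat)⁻¹ * Fmat ^ 6 := by
    rw [hS, Matrix.mul_sub, Matrix.mul_one, sub_add_cancel]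
  conv_lhs => rw [hsplit]
  rw [Matrix.add_mulVec, dotProduct_add, main_eq, ← Matrix.mulVec_mulVec]


/-- The matrix `I - F` is invertible over the power series ring, and the transfer
function `T = g (I - F)⁻¹ t` has `Z⁵`-coefficient `a²b²d + bc²d²` and
`Z⁶`-coefficient `2a²bc²d + a²b²d² + b²c²d²`. -/
theorem transfer_function_coefficients :
    IsUnit (1 - Fmat) ∧
    PowerSeries.coeff (R := TransferRing) 5 (gvec ⬝ᵥ ((1 - Fmat)⁻¹ *ᵥ tvec)) =
      (X 0) ^ 2 * (X 1) ^ 2 * (X 3) + (X 1) * (X 2) ^ 2 * (X 3) ^ 2 ∧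
    PowerSeries.coeff (R := TransferRing) 6 (gvec ⬝ᵥ ((1 - Fmat)⁻¹ *ᵥ tvec)) =
      2 * (X 0) ^ 2 * (X 1) * (X 2) ^ 2 * (X 3) +
        (X 0) ^ 2 * (X 1) ^ 2 * (X 3) ^ 2 + (X 1) ^ 2 * (X 2) ^ 2 * (X 3) ^ 2 := by
  refine ⟨isUnit_one_sub_Fmat, ?_, ?_⟩
  · rw [transfer_split, map_add, coeff_Emain_five,
      (PowerSeries.X_pow_dvd_iff.mp remainder_dvd) 5 (by norm_num), add_zero]
  · rw [transfer_split, map_add, coeff_Emain_six,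
      (PowerSeries.X_pow_dvd_iff.mp remainder_dvd) 6 (by norm_num), add_zero]

end
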